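/- Let f : ℝ → ℝ be convex and differentiable with f(1) = 0, let δ > 0 and N ∈ ℕ, N ≥ 1. For a vector of 0-1 losses ℓ ∈ {0,1}^N define the empirical risk R̂(ℓ) = (1/N)∑_{i=1}^N ℓ_i and the adversarial empirical risk R̂_adv(ℓ) = sup_{r ∈ Û_f} (1/N)∑_{i=1}^N r_i ℓ_i. Then for any ℓ, ℓ' ∈ {0,1}^N: (i) if R̂_adv(ℓ) < 1, then R̂_adv(ℓ) < R̂_adv(ℓ') if and only if R̂(ℓ) < R̂(ℓ'); (ii) if R̂_adv(ℓ) = 1 and R̂(ℓ) ≤ R̂(ℓ'), then R̂_adv(ℓ') = 1. -/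

import Mathlib

/-- The empirical uncertainty set
`Û_f = { r : (1/N)∑ f(rᵢ) ≤ δ, (1/N)∑ rᵢ = 1, rᵢ ≥ 0 }`. -/
def UfEmp (N : ℕ) (f : ℝ → ℝ) (δ : ℝ) : Set (Fin N → ℝ) :=
  {r | (1 / (N : ℝ)) * ∑ i, f (r i) ≤ δ ∧ (1 / (N : ℝ)) * ∑ i, r i = 1 ∧ ∀ i, 0 ≤ r i}

/-- The empirical risk `(1/N)∑ ℓᵢ`. -/
noncomputable def Rhat (N : ℕ) (ℓ : Fin N → ℝ) : ℝ := (1 / (N : ℝ)) * ∑ i, ℓ i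

/-- The adversarial empirical risk `sup_{r ∈ Û_f} (1/N)∑ rᵢ ℓᵢ`. -/
noncomputable def RhatAdv (N : ℕ) (f : ℝ → ℝ) (δ : ℝ) (ℓ : Fin N → ℝ) : ℝ :=
  sSup {x | ∃ r ∈ UfEmp N f δ, x = (1 / (N : ℝ)) * ∑ i, r i * ℓ i}

section Aux

variable {N : ℕ} {f : ℝ → ℝ} {δ : ℝ}

/-- The value set whose `sSup` is `RhatAdv`. -/
def AdvSet (N : ℕ) (f : ℝ → ℝ) (δ : ℝ) (ℓ : Fin N → ℝ) : Set ℝ :=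
  {x | ∃ r ∈ UfEmp N f δ, x = (1 / (N : ℝ)) * ∑ i, r i * ℓ i}

lemma rhatAdv_eq (ℓ : Fin N → ℝ) : RhatAdv N f δ ℓ = sSup (AdvSet N f δ ℓ) := rfl

lemma sum_eq_of_mem (hN : 1 ≤ N) {r : Fin N → ℝ} (hr : r ∈ UfEmp N f δ) :
    ∑ i, r i = (N : ℝ) := by
  have hN0 : (N : ℝ) ≠ 0 := Nat.cast_ne_zero.2 (by omega)
  have h := hr.2.1
  field_simp at h
  linarith

lemma one_mem_UfEmp (hN : 1 ≤ N) (hf1 : f 1 = 0) (hδ : 0 < δ) :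
    (fun _ => (1 : ℝ)) ∈ UfEmp N f δ := by
  have hN0 : (N : ℝ) ≠ 0 := Nat.cast_ne_zero.2 (by omega)
  refine ⟨?_, ?_, fun i => zero_le_one⟩
  · simp [hf1]; linarith
  · field_simp; simp

lemma advSet_nonempty (hN : 1 ≤ N) (hf1 : f 1 = 0) (hδ : 0 < δ) (ℓ : Fin N → ℝ) :
    (AdvSet N f δ ℓ).Nonempty :=
  ⟨_, (fun _ => (1 : ℝ)), one_mem_UfEmp hN hf1 hδ, rfl⟩

lemma val_le_one (hN : 1 ≤ N) {r ℓ : Fin N → ℝ} (hr : r ∈ UfEmp N f δ)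
    (hℓ : ∀ i, ℓ i = 0 ∨ ℓ i = 1) :
    (1 / (N : ℝ)) * ∑ i, r i * ℓ i ≤ 1 := by
  have hN0 : (0 : ℝ) < N := by exact_mod_cast Nat.pos_of_ne_zero (by omega)
  have h1 : ∑ i, r i * ℓ i ≤ ∑ i, r i := by
    apply Finset.sum_le_sum
    intro i _
    have h2 : ℓ i ≤ 1 := by rcases hℓ i with h | h <;> simp [h]
    nlinarith [hr.2.2 i]
  rw [sum_eq_of_mem hN hr] at h1
  rw [div_mul_eq_mul_div, mul_comm]
  rw [div_le_one hN0]
  linarith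

lemma advSet_bddAbove (hN : 1 ≤ N) {ℓ : Fin N → ℝ} (hℓ : ∀ i, ℓ i = 0 ∨ ℓ i = 1) :
    (1 : ℝ) ∈ upperBounds (AdvSet N f δ ℓ) := by
  rintro x ⟨r, hr, rfl⟩
  exact val_le_one hN hr hℓ

lemma rhatAdv_le_one (hN : 1 ≤ N) (hf1 : f 1 = 0) (hδ : 0 < δ) {ℓ : Fin N → ℝ}
    (hℓ : ∀ i, ℓ i = 0 ∨ ℓ i = 1) : RhatAdv N f δ ℓ ≤ 1 :=
  csSup_le (advSet_nonempty hN hf1 hδ ℓ) (fun _ hx => advSet_bddAbove hN hℓ hx)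

lemma comp_mem_UfEmp {r : Fin N → ℝ} (σ : Equiv.Perm (Fin N)) (hr : r ∈ UfEmp N f δ) :
    r ∘ σ ∈ UfEmp N f δ := by
  refine ⟨?_, ?_, fun i => hr.2.2 _⟩
  · have : ∑ i, f (r (σ i)) = ∑ i, f (r i) := Equiv.sum_comp σ (fun i => f (r i))
    simpa [Function.comp, this] using hr.1
  · have : ∑ i, r (σ i) = ∑ i, r i := Equiv.sum_comp σ r
    simpa [Function.comp, this] using hr.2.1

lemma advSet_perm_subset (σ : Equiv.Perm (Fin N)) (ℓ : Fin N → ℝ) :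
    AdvSet N f δ ℓ ⊆ AdvSet N f δ (ℓ ∘ σ) := by
  rintro x ⟨r, hr, rfl⟩
  refine ⟨r ∘ σ, comp_mem_UfEmp σ hr, ?_⟩
  have : ∑ i, r (σ i) * ℓ (σ i) = ∑ i, r i * ℓ i :=
    Equiv.sum_comp σ (fun i => r i * ℓ i)
  simp [Function.comp, this]

lemma rhatAdv_perm (σ : Equiv.Perm (Fin N)) (ℓ : Fin N → ℝ) :
    RhatAdv N f δ (ℓ ∘ σ) = RhatAdv N f δ ℓ := by
  rw [rhatAdv_eq, rhatAdv_eq]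
  congr 1
  apply le_antisymm
  · have h := advSet_perm_subset (f := f) (δ := δ) σ⁻¹ (ℓ ∘ σ)
    have he : (ℓ ∘ σ) ∘ (σ⁻¹ : Equiv.Perm (Fin N)) = ℓ := by
      funext i; simp
    rwa [he] at h
  · exact advSet_perm_subset σ ℓ

lemma rhatAdv_mono_pointwise (hN : 1 ≤ N) (hf1 : f 1 = 0) (hδ : 0 < δ)
    {ℓ ℓ' : Fin N → ℝ} (hℓ' : ∀ i, ℓ' i = 0 ∨ ℓ' i = 1)
    (hle : ∀ i, ℓ i ≤ ℓ' i) : RhatAdv N f δ ℓ ≤ RhatAdv N f δ ℓ' := by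
  rw [rhatAdv_eq, rhatAdv_eq]
  apply csSup_le (advSet_nonempty hN hf1 hδ ℓ)
  rintro x ⟨r, hr, rfl⟩
  have h1 : (1 / (N : ℝ)) * ∑ i, r i * ℓ i ≤ (1 / (N : ℝ)) * ∑ i, r i * ℓ' i := by
    have hNn : (0 : ℝ) ≤ 1 / (N : ℝ) := by positivity
    apply mul_le_mul_of_nonneg_left _ hNn
    apply Finset.sum_le_sum
    intro i _
    exact mul_le_mul_of_nonneg_left (hle i) (hr.2.2 i)
  exact h1.trans (le_csSup ⟨1, advSet_bddAbove hN hℓ'⟩ ⟨r, hr, rfl⟩)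

/-- Sorting-based comparison permutation. -/
lemma exists_perm_le {ℓ ℓ' : Fin N → ℝ} (hℓ : ∀ i, ℓ i = 0 ∨ ℓ i = 1)
    (hℓ' : ∀ i, ℓ' i = 0 ∨ ℓ' i = 1) (hsum : ∑ i, ℓ i ≤ ∑ i, ℓ' i) :
    ∃ σ : Equiv.Perm (Fin N), ∀ i, ℓ (σ i) ≤ ℓ' i := by
  set τ := Tuple.sort ℓ with hτ
  set τ' := Tuple.sort ℓ' with hτ'
  have key : ∀ j, ℓ (τ j) ≤ ℓ' (τ' j) := by
    intro j
    by_contra hcon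
    push_neg at hcon
    have h1 : ℓ (τ j) = 1 ∧ ℓ' (τ' j) = 0 := by
      rcases hℓ (τ j) with h | h <;> rcases hℓ' (τ' j) with h' | h' <;>
        simp [h, h'] at hcon ⊢ <;> linarith
    -- lower bound for ∑ ℓ
    have hge : ∀ i, j ≤ i → (1 : ℝ) ≤ ℓ (τ i) := by
      intro i hij
      have := Tuple.monotone_sort ℓ hij
      simp only [Function.comp] at this
      rw [← hτ] at this
      linarith [h1.1]
    have hle0 : ∀ i, i ≤ j → ℓ' (τ' i) ≤ 0 := by
      intro i hij
      have := Tuple.monotone_sort ℓ' hij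
      simp only [Function.comp] at this
      rw [← hτ'] at this
      linarith [h1.2]
    have e1 : ∑ i, ℓ (τ i) = ∑ i, ℓ i := Equiv.sum_comp τ ℓ
    have e2 : ∑ i, ℓ' (τ' i) = ∑ i, ℓ' i := Equiv.sum_comp τ' ℓ'
    have b1 : ((Finset.Ici j).card : ℝ) ≤ ∑ i, ℓ (τ i) := by
      calc ((Finset.Ici j).card : ℝ) = ∑ i ∈ Finset.Ici j, (1 : ℝ) := by simp
        _ ≤ ∑ i ∈ Finset.Ici j, ℓ (τ i) :=
            Finset.sum_le_sum (fun i hi => hge i (Finset.mem_Ici.1 hi))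
        _ ≤ ∑ i, ℓ (τ i) := by
            apply Finset.sum_le_sum_of_subset_of_nonneg (Finset.subset_univ _)
            intro i _ _
            rcases hℓ (τ i) with h | h <;> simp [h]
    have b2 : ∑ i, ℓ' (τ' i) ≤ ((Finset.Ioi j).card : ℝ) := by
      calc ∑ i, ℓ' (τ' i) ≤ ∑ i, (if j < i then (1 : ℝ) else 0) := by
            apply Finset.sum_le_sum
            intro i _
            by_cases hji : j < i
            · simp only [if_pos hji]
              rcases hℓ' (τ' i) with h | h <;> simp [h]
            · simp only [if_neg hji]
              exact hle0 i (le_of_not_gt hji)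
        _ = ((Finset.Ioi j).card : ℝ) := by
            rw [← Finset.sum_filter, Finset.filter_lt_eq_Ioi]
            simp
    have hcard : (Finset.Ioi j).card < (Finset.Ici j).card := by
      rw [Fin.card_Ioi, Fin.card_Ici]
      omega
    have : ((Finset.Ioi j).card : ℝ) < ((Finset.Ici j).card : ℝ) := by exact_mod_cast hcard
    linarith [b1, b2, e1 ▸ b1, e2 ▸ b2]
  refine ⟨τ * τ'⁻¹, fun i => ?_⟩
  have := key (τ'⁻¹ i)
  simpa using this

/-- Core strict monotonicity, via an averaging (Jensen) construction. -/
lemma rhatAdv_strict_core (hconv : ConvexOn ℝ Set.univ f) (hN : 1 ≤ N) (hf1 : f 1 = 0)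
    (hδ : 0 < δ) {ℓ ℓ' : Fin N → ℝ} (hℓ : ∀ i, ℓ i = 0 ∨ ℓ i = 1)
    (hℓ' : ∀ i, ℓ' i = 0 ∨ ℓ' i = 1) (hle : ∀ i, ℓ i ≤ ℓ' i)
    {j : Fin N} (hj0 : ℓ j = 0) (hj1 : ℓ' j = 1)
    (h1 : RhatAdv N f δ ℓ < 1) : RhatAdv N f δ ℓ < RhatAdv N f δ ℓ' := by
  classical
  have hNpos : (0 : ℝ) < N := by exact_mod_cast Nat.pos_of_ne_zero (by omega)
  set a := RhatAdv N f δ ℓ with ha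
  set ε : ℝ := (1 - a) / (2 * N) with hε
  have hεpos : 0 < ε := by
    apply div_pos (by linarith) (by positivity)
  obtain ⟨x, hxmem, hxgt⟩ := exists_lt_of_lt_csSup (advSet_nonempty hN hf1 hδ ℓ)
    (show a - ε < sSup (AdvSet N f δ ℓ) from by rw [← rhatAdv_eq]; linarith)
  obtain ⟨r, hr, rfl⟩ := hxmem
  set T : Finset (Fin N) := Finset.univ.filter (fun i => ℓ i = 0) with hT
  have hjT : j ∈ T := by simp [hT, hj0]
  have hmpos : 0 < (T.card : ℝ) := by
    have : 0 < T.card := Finset.card_pos.2 ⟨j, hjT⟩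
    exact_mod_cast this
  set m : ℝ := (T.card : ℝ) with hm
  have hmN : m ≤ (N : ℝ) := by
    have h := Finset.card_le_univ T
    simp only [Finset.card_univ, Fintype.card_fin] at h
    rw [hm]
    exact_mod_cast h
  set b : ℝ := (∑ i ∈ T, r i) / m with hb
  have hbnn : 0 ≤ b := div_nonneg (Finset.sum_nonneg fun i _ => hr.2.2 i) hmpos.le
  set r'' : Fin N → ℝ := fun i => if ℓ i = 0 then b else r i with hr''
  have hTr'' : ∀ i ∈ T, r'' i = b := by
    intro i hi
    simp only [hT, Finset.mem_filter] at hi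
    simp [hr'', hi.2]
  have hTcr'' : ∀ i ∈ Tᶜ, r'' i = r i := by
    intro i hi
    simp only [hT, Finset.mem_compl, Finset.mem_filter, Finset.mem_univ, true_and] at hi
    simp [hr'', hi]
  have hsumT : ∑ i ∈ T, r'' i = ∑ i ∈ T, r i := by
    rw [Finset.sum_congr rfl hTr'', Finset.sum_const, nsmul_eq_mul, hb, ← hm,
      mul_div_cancel₀ _ (ne_of_gt hmpos)]
  have hsum'' : ∑ i, r'' i = ∑ i, r i := by
    rw [← Finset.sum_add_sum_compl T r'', ← Finset.sum_add_sum_compl T r, hsumT,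
      Finset.sum_congr rfl hTcr'']
  -- Jensen
  have hjensen : m * f b ≤ ∑ i ∈ T, f (r i) := by
    have hcm := hconv.map_centerMass_le (t := T) (w := fun _ => (1 : ℝ)) (p := r)
      (fun i _ => zero_le_one) (by rw [Finset.sum_const, nsmul_eq_mul, mul_one, ← hm]; exact hmpos) (fun i _ => Set.mem_univ _)
    simp only [Finset.centerMass, Finset.sum_const, nsmul_eq_mul, mul_one, smul_eq_mul,
      one_mul, Function.comp] at hcm
    rw [show b = ((T.card : ℝ))⁻¹ * ∑ i ∈ T, r i from by rw [hb, ← hm]; ring]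
    have h2 : ((T.card : ℝ))⁻¹ * ∑ i ∈ T, f (r i) = (∑ i ∈ T, f (r i)) / m := by
      rw [← hm]; ring
    rw [show (m : ℝ) * f (((T.card : ℝ))⁻¹ * ∑ i ∈ T, r i)
        ≤ ∑ i ∈ T, f (r i) ↔ f (((T.card : ℝ))⁻¹ * ∑ i ∈ T, r i)
        ≤ (∑ i ∈ T, f (r i)) / m from by
      rw [le_div_iff₀ hmpos]; constructor <;> intro <;> linarith]
    exact le_trans hcm (by rw [h2])
  have hfsum'' : ∑ i, f (r'' i) ≤ ∑ i, f (r i) := by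
    rw [← Finset.sum_add_sum_compl T (fun i => f (r'' i)),
      ← Finset.sum_add_sum_compl T (fun i => f (r i))]
    have e1 : ∑ i ∈ T, f (r'' i) = m * f b := by
      rw [Finset.sum_congr rfl (fun i hi => by rw [hTr'' i hi]), Finset.sum_const,
        nsmul_eq_mul, hm]
    have e2 : ∑ i ∈ Tᶜ, f (r'' i) = ∑ i ∈ Tᶜ, f (r i) :=
      Finset.sum_congr rfl (fun i hi => by rw [hTcr'' i hi])
    rw [e1, e2]
    linarith [hjensen]
  have hr''mem : r'' ∈ UfEmp N f δ := by
    refine ⟨?_, ?_, ?_⟩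
    · calc (1 / (N : ℝ)) * ∑ i, f (r'' i) ≤ (1 / (N : ℝ)) * ∑ i, f (r i) := by
            apply mul_le_mul_of_nonneg_left hfsum'' (by positivity)
        _ ≤ δ := hr.1
    · rw [hsum'']; exact hr.2.1
    · intro i
      by_cases h : ℓ i = 0
      · simp [hr'', h, hbnn]
      · simpa [hr'', h] using hr.2.2 i
  -- values
  have hval_eq : ∑ i, r'' i * ℓ i = ∑ i, r i * ℓ i := by
    apply Finset.sum_congr rfl
    intro i _
    by_cases h : ℓ i = 0
    · simp [h]
    · simp [hr'', h]
  have hval_gain : ∑ i, r'' i * ℓ i + b ≤ ∑ i, r'' i * ℓ' i := by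
    have hterm : ∀ i ∈ Finset.univ, 0 ≤ r'' i * ℓ' i - r'' i * ℓ i := by
      intro i _
      have h0 : 0 ≤ r'' i := by
        by_cases h : ℓ i = 0
        · simp [hr'', h, hbnn]
        · simpa [hr'', h] using hr.2.2 i
      nlinarith [hle i]
    have hj' : r'' j * ℓ' j - r'' j * ℓ j = b := by
      simp [hr'', hj0, hj1]
    have := Finset.single_le_sum hterm (Finset.mem_univ j)
    rw [hj'] at this
    rw [Finset.sum_sub_distrib] at this
    linarith
  -- quantitative bounds
  set s : ℝ := ∑ i, r i * ℓ i with hs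
  clear_value a ε m b
  have hsleN : s ≤ (N : ℝ) := by
    have h := val_le_one hN hr hℓ
    rw [← hs] at h
    calc s = (N : ℝ) * ((1 / (N : ℝ)) * s) := by field_simp
      _ ≤ (N : ℝ) * 1 := mul_le_mul_of_nonneg_left h hNpos.le
      _ = (N : ℝ) := mul_one _
  clear_value s
  have hsgt : (N : ℝ) * (a - ε) < s := by
    calc (N : ℝ) * (a - ε) < (N : ℝ) * ((1 / (N : ℝ)) * s) :=
          mul_lt_mul_of_pos_left hxgt hNpos
      _ = s := by field_simp
  have hbge : ((N : ℝ) - s) / (N : ℝ) ≤ b := by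
    have hTs : ∑ i ∈ T, r i = (N : ℝ) - s := by
      have hsplit : ∑ i ∈ T, r i + ∑ i ∈ Tᶜ, r i = ∑ i, r i :=
        Finset.sum_add_sum_compl T r
      have hTc2 : ∑ i ∈ Tᶜ, r i = s := by
        rw [hs, ← Finset.sum_add_sum_compl T (fun i => r i * ℓ i)]
        have z1 : ∑ i ∈ T, r i * ℓ i = 0 := by
          apply Finset.sum_eq_zero
          intro i hi
          simp only [hT, Finset.mem_filter] at hi
          simp [hi.2]
        have z2 : ∑ i ∈ Tᶜ, r i * ℓ i = ∑ i ∈ Tᶜ, r i := by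
          apply Finset.sum_congr rfl
          intro i hi
          simp only [hT, Finset.mem_compl, Finset.mem_filter, Finset.mem_univ,
            true_and] at hi
          rcases hℓ i with h | h
          · exact absurd h hi
          · simp [h]
        rw [z1, z2, zero_add]
      rw [sum_eq_of_mem hN hr] at hsplit
      linarith
    rw [hb, hTs]
    apply div_le_div_of_nonneg_left (by linarith) hmpos hmN
  -- conclude
  have hmem' : (1 / (N : ℝ)) * ∑ i, r'' i * ℓ' i ∈ AdvSet N f δ ℓ' := ⟨r'', hr''mem, rfl⟩
  have hfin : a < (1 / (N : ℝ)) * ∑ i, r'' i * ℓ' i := by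
    have hv : s + ((N : ℝ) - s) / (N : ℝ) ≤ ∑ i, r'' i * ℓ' i := by
      have := hval_gain
      rw [hval_eq] at this
      linarith
    have key : a * ((N : ℝ) * (N : ℝ)) < s * (N : ℝ) + ((N : ℝ) - s) := by
      have hN1 : (0:ℝ) ≤ (N:ℝ) - 1 := by
        have : (1:ℝ) ≤ (N:ℝ) := by exact_mod_cast hN
        linarith
      have h4 : (N:ℝ) * (a - ε) = (N:ℝ) * a - (N:ℝ) * ε := by ring
      have h5 : (N:ℝ) * ε = (1 - a) / 2 := by
        rw [hε]
        field_simp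
      have hsgt2 : (N:ℝ) * a - (1 - a) / 2 < s := by linarith [hsgt, h4, h5]
      nlinarith [mul_nonneg (sub_nonneg.2 hsgt2.le) hN1, h1, hNpos, hsgt2, hN1]
    have h3 : a < (1 / (N : ℝ)) * (s + ((N : ℝ) - s) / (N : ℝ)) := by
      rw [show (1 / (N : ℝ)) * (s + ((N : ℝ) - s) / (N : ℝ))
          = (s * (N : ℝ) + ((N : ℝ) - s)) / ((N : ℝ) * (N : ℝ)) from by field_simp]
      rw [lt_div_iff₀ (by positivity)]
      exact key
    calc a < (1 / (N : ℝ)) * (s + ((N : ℝ) - s) / (N : ℝ)) := h3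
      _ ≤ (1 / (N : ℝ)) * ∑ i, r'' i * ℓ' i := by
          apply mul_le_mul_of_nonneg_left hv (by positivity)
  calc a < (1 / (N : ℝ)) * ∑ i, r'' i * ℓ' i := hfin
    _ ≤ RhatAdv N f δ ℓ' :=
        le_csSup ⟨1, advSet_bddAbove hN hℓ'⟩ hmem'

lemma rhatAdv_mono (hN : 1 ≤ N) (hf1 : f 1 = 0) (hδ : 0 < δ) {ℓ ℓ' : Fin N → ℝ}
    (hℓ : ∀ i, ℓ i = 0 ∨ ℓ i = 1) (hℓ' : ∀ i, ℓ' i = 0 ∨ ℓ' i = 1)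
    (hsum : ∑ i, ℓ i ≤ ∑ i, ℓ' i) : RhatAdv N f δ ℓ ≤ RhatAdv N f δ ℓ' := by
  obtain ⟨σ, hσ⟩ := exists_perm_le hℓ hℓ' hsum
  calc RhatAdv N f δ ℓ = RhatAdv N f δ (ℓ ∘ σ) := (rhatAdv_perm σ ℓ).symm
    _ ≤ RhatAdv N f δ ℓ' := rhatAdv_mono_pointwise hN hf1 hδ hℓ' hσ

lemma rhatAdv_strict (hconv : ConvexOn ℝ Set.univ f) (hN : 1 ≤ N) (hf1 : f 1 = 0)
    (hδ : 0 < δ) {ℓ ℓ' : Fin N → ℝ}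
    (hℓ : ∀ i, ℓ i = 0 ∨ ℓ i = 1) (hℓ' : ∀ i, ℓ' i = 0 ∨ ℓ' i = 1)
    (hsum : ∑ i, ℓ i < ∑ i, ℓ' i) (h1 : RhatAdv N f δ ℓ < 1) :
    RhatAdv N f δ ℓ < RhatAdv N f δ ℓ' := by
  obtain ⟨σ, hσ⟩ := exists_perm_le hℓ hℓ' hsum.le
  have hsc : ∑ i, ℓ (σ i) = ∑ i, ℓ i := Equiv.sum_comp σ ℓ
  have hlt : ∑ i, ℓ (σ i) < ∑ i, ℓ' i := by rw [hsc]; exact hsum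
  obtain ⟨j, _, hj⟩ := Finset.exists_lt_of_sum_lt hlt
  have hj0 : ℓ (σ j) = 0 := by
    rcases hℓ (σ j) with h | h
    · exact h
    · rcases hℓ' j with h' | h' <;> rw [h, h'] at hj <;> linarith
  have hj1 : ℓ' j = 1 := by
    rcases hℓ' j with h | h
    · rw [hj0, h] at hj; linarith
    · exact h
  rw [← rhatAdv_perm σ ℓ]
  exact rhatAdv_strict_core hconv hN hf1 hδ (fun i => hℓ (σ i)) hℓ' hσ hj0 hj1
    (by rw [rhatAdv_perm]; exact h1)

end Aux

/-- Empirical version of Theorem 1: with 0-1 losses, the adversarial empirical risk is a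
monotonic function of the empirical risk. -/
theorem stmt1 (f : ℝ → ℝ) (hconv : ConvexOn ℝ Set.univ f) (hdiff : Differentiable ℝ f)
    (hf1 : f 1 = 0) (δ : ℝ) (hδ : 0 < δ) (N : ℕ) (hN : 1 ≤ N)
    (ℓ ℓ' : Fin N → ℝ) (hℓ : ∀ i, ℓ i = 0 ∨ ℓ i = 1) (hℓ' : ∀ i, ℓ' i = 0 ∨ ℓ' i = 1) :
    (RhatAdv N f δ ℓ < 1 → (RhatAdv N f δ ℓ < RhatAdv N f δ ℓ' ↔ Rhat N ℓ < Rhat N ℓ')) ∧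
    (RhatAdv N f δ ℓ = 1 → Rhat N ℓ ≤ Rhat N ℓ' → RhatAdv N f δ ℓ' = 1) := by
  have hNpos : (0 : ℝ) < 1 / (N : ℝ) := by
    have : (0 : ℝ) < N := by exact_mod_cast Nat.pos_of_ne_zero (by omega)
    positivity
  have hiff : Rhat N ℓ < Rhat N ℓ' ↔ ∑ i, ℓ i < ∑ i, ℓ' i := by
    unfold Rhat
    exact mul_lt_mul_iff_right₀ hNpos
  have hiff2 : Rhat N ℓ ≤ Rhat N ℓ' ↔ ∑ i, ℓ i ≤ ∑ i, ℓ' i := by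
    unfold Rhat
    exact mul_le_mul_iff_right₀ hNpos
  constructor
  · intro hlt1
    constructor
    · intro h
      by_contra hc
      push_neg at hc
      have hc2 : ∑ i, ℓ' i ≤ ∑ i, ℓ i := by
        unfold Rhat at hc
        exact (mul_le_mul_iff_right₀ hNpos).1 hc
      have := rhatAdv_mono hN hf1 hδ hℓ' hℓ hc2
      linarith
    · intro h
      exact rhatAdv_strict hconv hN hf1 hδ hℓ hℓ' (hiff.1 h) hlt1
  · intro h1 h2
    have hm := rhatAdv_mono hN hf1 hδ hℓ hℓ' (hiff2.1 h2)
    have hb := rhatAdv_le_one hN hf1 hδ hℓ'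
    rw [h1] at hm
    linarith
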